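/- log 2 = 5/6 - 6 · ∑_{j=1}^∞ 1 / ( 2^j · j(j+1)(j+2)(j+3) ), where log denotes the natural logarithm. -/

import Mathlib

theorem statement10 :
    Real.log 2 = 5 / 6 - 6 *
      ∑' j : ℕ, 1 /
        ((2 : ℝ) ^ (j + 1) * ((j : ℝ) + 1) * ((j : ℝ) + 2) * ((j : ℝ) + 3) * ((j : ℝ) + 4)) := by
  set L := Real.log 2 with hL
  set f : ℕ → ℝ := fun n => ((1:ℝ)/2) ^ (n + 1) / ((n : ℝ) + 1) with hf
  have h0 : HasSum f L := by
    have := Real.hasSum_pow_div_log_of_abs_lt_one (x := (1:ℝ)/2) (by rw [abs_lt]; norm_num)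
    have h12 : (1:ℝ) - 1/2 = 2⁻¹ := by norm_num
    rw [h12, Real.log_inv] at this
    simpa [hf] using this
  have h1 : HasSum (fun n : ℕ => ((1:ℝ)/2) ^ (n + 1) / ((n : ℝ) + 2)) (2 * L - 1) := by
    have h := ((hasSum_nat_add_iff' (f := f) 1).mpr h0).mul_left 2
    convert h using 1
    · exact rfl
    · funext n; simp only [hf]; push_cast; ring
    · simp [hf]; ring
  have h2 : HasSum (fun n : ℕ => ((1:ℝ)/2) ^ (n + 1) / ((n : ℝ) + 3)) (4 * L - 5/2) := by
    have h := ((hasSum_nat_add_iff' (f := f) 2).mpr h0).mul_left 4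
    convert h using 1
    · exact rfl
    · funext n; simp only [hf]; push_cast; ring
    · simp [hf, Finset.sum_range_succ]; ring
  have h3 : HasSum (fun n : ℕ => ((1:ℝ)/2) ^ (n + 1) / ((n : ℝ) + 4)) (8 * L - 16/3) := by
    have h := ((hasSum_nat_add_iff' (f := f) 3).mpr h0).mul_left 8
    convert h using 1
    · exact rfl
    · funext n; simp only [hf]; push_cast; ring
    · simp [hf, Finset.sum_range_succ]; ring
  have hc := (((h0.sub (h1.mul_left 3)).add (h2.mul_left 3)).sub h3).div_const 6
  have key : HasSum (fun j : ℕ => 1 /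
      ((2 : ℝ) ^ (j + 1) * ((j : ℝ) + 1) * ((j : ℝ) + 2) * ((j : ℝ) + 3) * ((j : ℝ) + 4)))
      (5/36 - L/6) := by
    convert hc using 1
    · exact rfl
    · funext n
      simp only [hf]
      have e1 : ((n : ℝ) + 1) ≠ 0 := by positivity
      have e2 : ((n : ℝ) + 2) ≠ 0 := by positivity
      have e3 : ((n : ℝ) + 3) ≠ 0 := by positivity
      have e4 : ((n : ℝ) + 4) ≠ 0 := by positivity
      have e5 : ((2 : ℝ)) ^ (n + 1) ≠ 0 := by positivity
      simp only [div_pow, one_pow]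
      field_simp
      ring
    · ring
  rw [key.tsum_eq]
  ring
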